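/- Let λ > 0 and define Ψ(x) := ∫₀^{s(λx)/2} (1 − e^{−τ})/τ dτ for x ∈ ℝ³. Then for all x ∈ ℝ³∖{0} one has Δ[(4πλ)⁻¹ Ψ](x) = (4π|x|)⁻¹ e^{−s(λx)/2}, i.e. the Laplacian of the Oseen potential (4πλ)⁻¹Ψ equals the steady-state vorticity fundamental solution Φ₀. -/

import Mathlib

open MeasureTheory Real Set

noncomputable section

/-- Three-dimensional Euclidean space. -/
abbrev E3 : Type := EuclideanSpace ℝ (Fin 3)

/-- The wake function `s(x) = |x| + x₁`. -/
def wake (x : E3) : ℝ := ‖x‖ + x 0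

/-- The `j`-th standard basis vector of `ℝ³`. -/
def e3 (j : Fin 3) : E3 := EuclideanSpace.single j 1

/-- Euclidean norm of a triple of reals. -/
def vnorm (v : Fin 3 → ℝ) : ℝ := Real.sqrt (∑ i, v i ^ 2)

/-- The steady-state vorticity fundamental solution of the Oseen system:
`Φ₀(x) = (4π|x|)⁻¹ e^{−s(λx)/2}`. -/
def Phi0 (lam : ℝ) (x : E3) : ℝ :=
  (4 * Real.pi * ‖x‖)⁻¹ * Real.exp (-(wake (lam • x)) / 2)

/-- The Oseen potential `Ψ(x) = ∫₀^{s(λx)/2} (1 − e^{−τ})/τ dτ`. -/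
def Psi (lam : ℝ) (x : E3) : ℝ :=
  ∫ τ in (0:ℝ)..(wake (lam • x) / 2), (1 - Real.exp (-τ)) / τ

/-- The Laplacian on `ℝ³`, as the sum of the repeated directional derivatives. -/
def laplacian3 (g : E3 → ℝ) (x : E3) : ℝ :=
  ∑ j : Fin 3, fderiv ℝ (fun y => fderiv ℝ g y (e3 j)) x (e3 j)

/-! ### Auxiliary one-dimensional lemmas -/

/-- Smooth extension of `t ↦ (1 - e^{-t})/t`. -/
def gfun (t : ℝ) : ℝ := ∫ u in (0:ℝ)..1, Real.exp (-(u * t))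

/-- The derivative of `gfun`. -/
def g1fun (t : ℝ) : ℝ := ∫ u in (0:ℝ)..1, -(u * Real.exp (-(u * t)))

lemma cont_exp_mul (t : ℝ) : Continuous fun u : ℝ => Real.exp (-(u * t)) := by
  continuity

lemma hasDerivAt_gfun (t : ℝ) : HasDerivAt gfun (g1fun t) t := by
  have h := intervalIntegral.hasDerivAt_integral_of_dominated_loc_of_deriv_le
    (F := fun s u => Real.exp (-(u * s))) (F' := fun s u => -(u * Real.exp (-(u * s))))
    (x₀ := t) (a := 0) (b := 1) (bound := fun _ => Real.exp (|t| + 1)) (μ := volume)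
    (Metric.ball_mem_nhds t one_pos)
    (Filter.Eventually.of_forall fun s => (cont_exp_mul s).aestronglyMeasurable)
    ((cont_exp_mul t).intervalIntegrable 0 1)
    (Continuous.aestronglyMeasurable (by continuity))
    ?_ (intervalIntegrable_const) ?_
  · exact h.2
  · refine Filter.Eventually.of_forall fun u hu s hs => ?_
    have hu' : u ∈ Set.Ioc (0:ℝ) 1 := by simpa [Set.uIoc_of_le (zero_le_one)] using hu
    have hs' : |s| ≤ |t| + 1 := by
      have := mem_ball_iff_norm.mp hs
      have : |s - t| < 1 := by simpa [Real.norm_eq_abs] using this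
      calc |s| = |t + (s - t)| := by ring_nf
        _ ≤ |t| + |s - t| := abs_add_le _ _
        _ ≤ |t| + 1 := by linarith
    have h1 : ‖-(u * Real.exp (-(u * s)))‖ = u * Real.exp (-(u * s)) := by
      rw [norm_neg, Real.norm_eq_abs, abs_mul, abs_of_pos hu'.1, abs_of_pos (Real.exp_pos _)]
    rw [h1]
    have : -(u * s) ≤ |t| + 1 := by
      have hus : -(u * s) ≤ |u * s| := neg_le_abs _
      have : |u * s| ≤ |s| := by
        rw [abs_mul, abs_of_pos hu'.1]
        nlinarith [abs_nonneg s, hu'.1, hu'.2]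
      linarith
    calc u * Real.exp (-(u * s)) ≤ 1 * Real.exp (|t| + 1) := by
          apply mul_le_mul hu'.2 (Real.exp_le_exp.mpr this) (Real.exp_pos _).le zero_le_one
      _ = Real.exp (|t| + 1) := one_mul _
  · refine Filter.Eventually.of_forall fun u _ s _ => ?_
    have : HasDerivAt (fun s : ℝ => -(u * s)) (-u) s := by
      have h0 := ((hasDerivAt_id s).const_mul u).neg
      simp only [mul_one] at h0
      exact h0
    have h2 := this.exp
    refine h2.congr_deriv ?_
    ring

lemma key_identity (t : ℝ) : t * g1fun t + gfun t = Real.exp (-t) := by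
  have hderiv : ∀ u ∈ Set.uIcc (0:ℝ) 1,
      HasDerivAt (fun u : ℝ => u * Real.exp (-(u * t)))
        (Real.exp (-(u * t)) + t * -(u * Real.exp (-(u * t)))) u := by
    intro u _
    have h1 : HasDerivAt (fun u : ℝ => -(u * t)) (-t) u := by
      have h0 := ((hasDerivAt_id u).mul_const t).neg
      simp only [one_mul] at h0
      exact h0
    have := (hasDerivAt_id u).mul h1.exp
    refine this.congr_deriv ?_
    simp only [id_eq]; ring
  have hint : IntervalIntegrable
      (fun u : ℝ => Real.exp (-(u * t)) + t * -(u * Real.exp (-(u * t)))) volume 0 1 :=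
    (Continuous.intervalIntegrable (by continuity) 0 1)
  have h := intervalIntegral.integral_eq_sub_of_hasDerivAt hderiv hint
  rw [intervalIntegral.integral_add ((cont_exp_mul t).intervalIntegrable 0 1)
      (((Continuous.intervalIntegrable (by continuity) 0 1 : IntervalIntegrable
        (fun u : ℝ => -(u * Real.exp (-(u * t)))) volume 0 1)).const_mul t)] at h
  rw [intervalIntegral.integral_const_mul] at h
  simp only [one_mul, zero_mul, neg_zero, Real.exp_zero, mul_zero] at h
  rw [gfun, g1fun]
  linarith

lemma gfun_eq (t : ℝ) (ht : t ≠ 0) : gfun t = (1 - Real.exp (-t)) / t := by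
  have hderiv : ∀ u ∈ Set.uIcc (0:ℝ) 1,
      HasDerivAt (fun u : ℝ => -Real.exp (-(u * t)) / t) (Real.exp (-(u * t))) u := by
    intro u _
    have h1 : HasDerivAt (fun u : ℝ => -(u * t)) (-t) u := by
      have h0 := ((hasDerivAt_id u).mul_const t).neg
      simp only [one_mul] at h0
      exact h0
    have := (h1.exp.neg).div_const t
    refine this.congr_deriv ?_
    field_simp
  have h := intervalIntegral.integral_eq_sub_of_hasDerivAt hderiv
    ((cont_exp_mul t).intervalIntegrable 0 1)
  rw [gfun, h]
  simp only [one_mul, zero_mul, neg_zero, Real.exp_zero]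
  ring

lemma cont_gfun : Continuous gfun :=
  continuous_iff_continuousAt.mpr fun t => (hasDerivAt_gfun t).continuousAt

/-- Antiderivative: `Gfun t = ∫₀ᵗ gfun`. -/
def Gfun (t : ℝ) : ℝ := ∫ τ in (0:ℝ)..t, gfun τ

lemma hasDerivAt_Gfun (t : ℝ) : HasDerivAt Gfun (gfun t) t :=
  intervalIntegral.integral_hasDerivAt_right (cont_gfun.intervalIntegrable 0 t)
    (cont_gfun.stronglyMeasurableAtFilter _ _) cont_gfun.continuousAt

lemma integral_eq_Gfun (b : ℝ) :
    (∫ τ in (0:ℝ)..b, (1 - Real.exp (-τ)) / τ) = Gfun b := by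
  refine intervalIntegral.integral_congr_ae ?_
  have h0 : ∀ᵐ τ : ℝ, τ ≠ 0 := by
    rw [MeasureTheory.ae_iff]
    simpa using measure_singleton (0:ℝ)
  filter_upwards [h0] with τ hτ _
  rw [gfun_eq τ hτ]

/-! ### Auxiliary multivariable lemmas -/

lemma hasFDerivAt_norm' {x : E3} (hx : x ≠ 0) :
    HasFDerivAt (fun y : E3 => ‖y‖) (‖x‖⁻¹ • (innerSL ℝ x)) x := by
  have hsq : HasFDerivAt (fun y : E3 => ‖y‖ ^ 2) (2 • (innerSL ℝ x)) x :=
    (hasStrictFDerivAt_norm_sq x).hasFDerivAt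
  have hnx : ‖x‖ ≠ 0 := norm_ne_zero_iff.mpr hx
  have hsqrt : HasDerivAt Real.sqrt (1 / (2 * Real.sqrt (‖x‖ ^ 2))) (‖x‖ ^ 2) :=
    Real.hasDerivAt_sqrt (by positivity)
  have hcomp := hsqrt.comp_hasFDerivAt x hsq
  have heq : (fun y : E3 => Real.sqrt (‖y‖ ^ 2)) = fun y : E3 => ‖y‖ := by
    funext y; rw [Real.sqrt_sq (norm_nonneg y)]
  rw [Function.comp_def, heq] at hcomp
  refine hcomp.congr_fderiv ?_
  symm
  rw [Real.sqrt_sq (norm_nonneg x)]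
  ext h
  simp [smul_smul]
  field_simp

lemma innerSL_e3 (x : E3) (j : Fin 3) : (innerSL ℝ x) (e3 j) = x j := by
  simp [e3, EuclideanSpace.inner_single_right]

lemma e3_apply (j i : Fin 3) : (e3 j) i = if j = i then 1 else 0 := by
  simp [e3, EuclideanSpace.single_apply, eq_comm]

lemma proj_apply' (j : Fin 3) (y : E3) : (EuclideanSpace.proj j : E3 →L[ℝ] ℝ) y = y j := rfl

lemma sum_sq_eq (x : E3) : ∑ i : Fin 3, (x i) ^ 2 = ‖x‖ ^ 2 := by
  rw [EuclideanSpace.norm_eq, Real.sq_sqrt (by positivity)]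
  simp [Real.norm_eq_abs, sq_abs]

/-- The rescaled wake `S(y) = (λ/2)(‖y‖ + y₀)`. -/
def Sfun (lam : ℝ) (y : E3) : ℝ := lam / 2 * (‖y‖ + y 0)

lemma wake_smul {lam : ℝ} (hlam : 0 < lam) (y : E3) :
    wake (lam • y) / 2 = Sfun lam y := by
  have h0 : (lam • y) 0 = lam * y 0 := rfl
  rw [wake, Sfun, h0, norm_smul, Real.norm_eq_abs, abs_of_pos hlam]
  ring

/-- Derivative of `Sfun`. -/
def SD (lam : ℝ) (y : E3) : E3 →L[ℝ] ℝ :=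
  (lam / 2) • (‖y‖⁻¹ • (innerSL ℝ y) + EuclideanSpace.proj (0 : Fin 3))

lemma hasFDerivAt_Sfun {lam : ℝ} {y : E3} (hy : y ≠ 0) :
    HasFDerivAt (Sfun lam) (SD lam y) y := by
  have h := ((hasFDerivAt_norm' hy).add
    (EuclideanSpace.proj (0 : Fin 3)).hasFDerivAt).const_mul (lam / 2)
  exact h

/-- First directional derivative of the potential. -/
def Dfun (lam c : ℝ) (j : Fin 3) (y : E3) : ℝ :=
  c * gfun (Sfun lam y) * (lam / 2 * (y j * ‖y‖⁻¹ + if j = 0 then 1 else 0))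

lemma SD_e3 {lam : ℝ} (y : E3) (j : Fin 3) :
    SD lam y (e3 j) = lam / 2 * (y j * ‖y‖⁻¹ + if j = 0 then 1 else 0) := by
  simp only [SD, ContinuousLinearMap.smul_apply, ContinuousLinearMap.add_apply,
    innerSL_e3, proj_apply', smul_eq_mul]
  rw [e3_apply]
  simp only [eq_comm]
  ring_nf

lemma hasFDerivAt_F {lam c : ℝ} {y : E3} (hy : y ≠ 0) :
    HasFDerivAt (fun z : E3 => c * Gfun (Sfun lam z))
      ((c * gfun (Sfun lam y)) • SD lam y) y := by
  have h := ((hasDerivAt_Gfun (Sfun lam y)).comp_hasFDerivAt y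
    (hasFDerivAt_Sfun hy)).const_mul c
  simpa [Function.comp_def, smul_smul] using h

lemma fderiv_F_apply {lam c : ℝ} {y : E3} (hy : y ≠ 0) (j : Fin 3) :
    fderiv ℝ (fun z : E3 => c * Gfun (Sfun lam z)) y (e3 j) = Dfun lam c j y := by
  rw [(hasFDerivAt_F (lam := lam) (c := c) hy).fderiv, Dfun]
  simp only [ContinuousLinearMap.smul_apply, smul_eq_mul, SD_e3]

set_option maxHeartbeats 1000000 in
/-- **The Laplacian of the Oseen potential `(4πλ)⁻¹Ψ` equals `Φ₀`** on `ℝ³∖{0}`. -/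
theorem laplacian_oseen_potential_eq_Phi0 (lam : ℝ) (hlam : 0 < lam) :
    ∀ x : E3, x ≠ 0 →
      laplacian3 (fun y => (4 * Real.pi * lam)⁻¹ * Psi lam y) x = Phi0 lam x := by
  intro x hx
  set c : ℝ := (4 * Real.pi * lam)⁻¹ with hc
  set r : ℝ := ‖x‖ with hr
  have hrpos : 0 < r := norm_pos_iff.mpr hx
  have hrne : r ≠ 0 := ne_of_gt hrpos
  set t : ℝ := Sfun lam x with ht
  -- the potential is globally `c * Gfun (Sfun lam ·)`
  have hPsi : (fun y : E3 => (4 * Real.pi * lam)⁻¹ * Psi lam y)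
      = fun y : E3 => c * Gfun (Sfun lam y) := by
    funext y
    rw [Psi, integral_eq_Gfun, wake_smul hlam]
  rw [laplacian3, hPsi]
  -- eventuallly nonzero near x
  have hne : ∀ᶠ y in nhds x, y ≠ 0 := by
    have : {(0 : E3)}ᶜ ∈ nhds x := isOpen_compl_singleton.mem_nhds (by simpa using hx)
    filter_upwards [this] with y hy using hy
  -- second derivative for each direction j
  have key : ∀ j : Fin 3,
      fderiv ℝ (fun y => fderiv ℝ (fun z : E3 => c * Gfun (Sfun lam z)) y (e3 j)) x (e3 j)
        = c * gfun t * (lam / 2) * (x j * (-(r ^ 2)⁻¹) * r⁻¹ * x j + r⁻¹)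
          + (lam / 2 * (x j * r⁻¹ + if j = 0 then 1 else 0)) * c * g1fun t
            * (lam / 2 * (x j * r⁻¹ + if j = 0 then 1 else 0)) := by
    intro j
    have hEv : (fun y => fderiv ℝ (fun z : E3 => c * Gfun (Sfun lam z)) y (e3 j))
        =ᶠ[nhds x] Dfun lam c j := by
      filter_upwards [hne] with y hy using fderiv_F_apply hy j
    rw [hEv.fderiv_eq]
    -- build the derivative of `Dfun lam c j` at x
    have hg : HasFDerivAt (fun y : E3 => gfun (Sfun lam y)) (g1fun t • SD lam x) x := by
      have := (hasDerivAt_gfun t).comp_hasFDerivAt x (hasFDerivAt_Sfun (lam := lam) hx)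
      simpa [Function.comp_def, ht] using this
    have hinv : HasFDerivAt (fun y : E3 => ‖y‖⁻¹)
        ((-(r ^ 2)⁻¹) • (r⁻¹ • innerSL ℝ x)) x := by
      have := (hasDerivAt_inv hrne).comp_hasFDerivAt x (hasFDerivAt_norm' hx)
      simpa [Function.comp_def, hr] using this
    have hqj : HasFDerivAt (fun y : E3 => y j * ‖y‖⁻¹ + if j = 0 then 1 else 0)
        ((x j) • ((-(r ^ 2)⁻¹) • (r⁻¹ • innerSL ℝ x)) + ‖x‖⁻¹ • (EuclideanSpace.proj j)) x := by
      have h1 := ((EuclideanSpace.proj (j : Fin 3)).hasFDerivAt (x := x)).mul hinv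
      have h2 := h1.add_const (if j = 0 then (1:ℝ) else 0)
      simpa using h2
    have hD := (hg.const_mul c).mul (hqj.const_mul (lam / 2))
    have hDef : Dfun lam c j = fun y : E3 =>
        (c * gfun (Sfun lam y)) * (lam / 2 * (y j * ‖y‖⁻¹ + if j = 0 then 1 else 0)) := rfl
    rw [hDef, show (fun y : E3 => (c * gfun (Sfun lam y)) * (lam / 2 * (y j * ‖y‖⁻¹ + if j = 0 then 1 else 0)))
        = (fun y : E3 => c * gfun (Sfun lam y)) * (fun y : E3 => lam / 2 * (y j * ‖y‖⁻¹ + if j = 0 then 1 else 0)) from rfl,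
      hD.fderiv]
    simp only [ContinuousLinearMap.add_apply, ContinuousLinearMap.smul_apply,
      ContinuousLinearMap.coe_smul', Pi.smul_apply, smul_eq_mul, innerSL_e3,
      proj_apply', e3_apply, if_pos rfl, if_true, eq_self_iff_true, SD_e3, ← ht, ← hr]
    ring
  simp only [key]
  -- final algebra
  rw [Fin.sum_univ_three]
  have hsum : x 0 ^ 2 + x 1 ^ 2 + x 2 ^ 2 = r ^ 2 := by
    have := sum_sq_eq x
    rwa [Fin.sum_univ_three] at this
  have ht' : t = lam / 2 * (r + x 0) := rfl
  have hPhi : Phi0 lam x = (4 * Real.pi * r)⁻¹ * (t * g1fun t + gfun t) := by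
    rw [Phi0, key_identity t, ← hr]
    congr 1
    rw [neg_div, wake_smul hlam, ← ht]
  have e0 : (if (0:Fin 3) = 0 then (1:ℝ) else 0) = 1 := by norm_num
  have e1 : (if (1:Fin 3) = 0 then (1:ℝ) else 0) = 0 := if_neg (by decide)
  have e2 : (if (2:Fin 3) = 0 then (1:ℝ) else 0) = 0 := if_neg (by decide)
  rw [hPhi]
  set A := gfun t with hA
  set B := g1fun t with hB
  rw [ht', e0, e1, e2, hc]
  have hπ : Real.pi ≠ 0 := Real.pi_ne_zero
  have hlam' : lam ≠ 0 := ne_of_gt hlam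
  field_simp
  ring_nf
  linear_combination (-(2:ℝ) * A + r * lam * B) * hsum

end
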